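/- For every n ≥ 3, the Lucas atom P_n(s,t) over ℂ factors as a product of φ(n)/2 factors of the form s² + a t with a = 2b+2 > 0, where b ranges over the real parts of the primitive n-th roots of unity (taken in conjugate pairs). -/

import Mathlib

open MvPolynomial

open Polynomial in
private lemma lucas_coeff_aux (a b j : ℕ) :
    ((1 + Polynomial.X : Polynomial ℂ) ^ a * (-Polynomial.X) ^ b).coeff j =
      if b ≤ j then (-1 : ℂ) ^ b * ((1 + Polynomial.X : Polynomial ℂ) ^ a).coeff (j - b)
      else 0 := by
  have h1 : ((-Polynomial.X : Polynomial ℂ)) ^ b =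
      Polynomial.C ((-1 : ℂ) ^ b) * Polynomial.X ^ b := by
    rw [neg_pow]
    simp [map_pow]
  rw [h1, mul_left_comm, Polynomial.coeff_C_mul, Polynomial.coeff_mul_X_pow']
  split_ifs with h <;> simp

open Polynomial in
/-- Key injectivity lemma: a "weighted homogeneous" polynomial vanishing at (1+X, -X) is 0. -/
private lemma lucas_key {d : ℕ} (D : MvPolynomial (Fin 2) ℂ)
    (hD : ∀ m : Fin 2 →₀ ℕ, D.coeff m ≠ 0 → m 0 + 2 * m 1 = d)
    (h0 : MvPolynomial.aeval ![1 + Polynomial.X, -Polynomial.X] D = (0 : Polynomial ℂ)) :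
    D = 0 := by
  by_contra hne
  have hsupp : D.support.Nonempty := MvPolynomial.support_nonempty.mpr hne
  have himg : (D.support.image fun m => m 1).Nonempty := hsupp.image _
  set j0 : ℕ := (D.support.image fun m => m 1).min' himg with hj0
  obtain ⟨m0, hm0s, hm0⟩ := Finset.mem_image.mp ((D.support.image fun m => m 1).min'_mem himg)
  have hm0' : m0 1 = j0 := by rw [hj0]; exact hm0
  have hmin : ∀ m ∈ D.support, j0 ≤ m 1 := fun m hm =>
    Finset.min'_le _ _ (Finset.mem_image_of_mem _ hm)
  -- uniqueness of the minimal monomial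
  have huniq : ∀ m ∈ D.support, m 1 = j0 → m = m0 := by
    intro m hm hm1
    have h1 := hD m (MvPolynomial.mem_support_iff.mp hm)
    have h2 := hD m0 (MvPolynomial.mem_support_iff.mp hm0s)
    have h3 : m 0 = m0 0 := by omega
    have h4 : m 1 = m0 1 := by omega
    ext i
    fin_cases i
    · exact h3
    · exact h4
  -- compute the coefficient of X^j0 in the evaluation
  have key : (MvPolynomial.aeval ![1 + Polynomial.X, -Polynomial.X] D).coeff j0 =
      D.coeff m0 * (-1) ^ j0 := by
    have hrw : MvPolynomial.aeval ![1 + Polynomial.X, -Polynomial.X] D =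
        ∑ m ∈ D.support, Polynomial.C (D.coeff m) *
          ((1 + Polynomial.X) ^ m 0 * (-Polynomial.X : ℂ[X]) ^ m 1) := by
      rw [MvPolynomial.aeval_def, MvPolynomial.eval₂_eq' (algebraMap ℂ ℂ[X])]
      refine Finset.sum_congr rfl fun m hm => ?_
      simp [Fin.prod_univ_two, Polynomial.algebraMap_eq]
    rw [hrw, Polynomial.finset_sum_coeff]
    rw [Finset.sum_eq_single m0]
    · rw [Polynomial.coeff_C_mul, lucas_coeff_aux, hm0', if_pos le_rfl, Nat.sub_self]
      simp [Polynomial.coeff_zero_eq_eval_zero]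
    · intro m hm hmne
      have hlt : j0 < m 1 := lt_of_le_of_ne (hmin m hm) fun h => hmne (huniq m hm h.symm)
      rw [Polynomial.coeff_C_mul, lucas_coeff_aux, if_neg (by omega), mul_zero]
    · intro h; exact absurd hm0s h
  rw [h0] at key
  simp only [Polynomial.coeff_zero] at key
  exact MvPolynomial.mem_support_iff.mp hm0s (by
    rcases mul_eq_zero.mp key.symm with h | h
    · exact h
    · exact absurd h (pow_ne_zero _ (by norm_num)))

open Polynomial in
private lemma lucas_quad (z : ℂ) (hz : z * (starRingEnd ℂ) z = 1) :
    (1 + Polynomial.X) ^ 2 + Polynomial.C (2 * (z.re : ℂ) + 2) * (-Polynomial.X) =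
      (Polynomial.X - Polynomial.C z) *
        (Polynomial.X - Polynomial.C ((starRingEnd ℂ) z)) := by
  have hsum : (starRingEnd ℂ) z = 2 * (z.re : ℂ) - z := by
    have := Complex.add_conj z
    push_cast at this
    linear_combination this
  rw [hsum] at hz ⊢
  have hz' : (Polynomial.C z) * (2 * Polynomial.C ((z.re : ℂ)) - Polynomial.C z) =
      (1 : Polynomial ℂ) := by
    have := congrArg Polynomial.C hz
    simpa [map_mul, map_sub, map_ofNat, map_one] using this
  simp only [map_add, map_mul, map_sub, map_ofNat]
  linear_combination -hz'

theorem lucas_atom_factors (n : ℕ) (hn : 3 ≤ n) (P : MvPolynomial (Fin 2) ℤ)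
    (hform : ∀ m : Fin 2 →₀ ℕ, P.coeff m ≠ 0 → m 0 + 2 * m 1 = Nat.totient n)
    (heval : MvPolynomial.aeval ![1 + Polynomial.X, -Polynomial.X] P =
      Polynomial.cyclotomic n ℤ) :
    ∃ ζ : Fin (Nat.totient n / 2) → ℂ,
      (∀ i, IsPrimitiveRoot (ζ i) n) ∧
      MvPolynomial.map (Int.castRingHom ℂ) P =
        ∏ i, (X 0 ^ 2 + C (2 * (ζ i).re + 2 : ℂ) * X 1) ∧
      ∀ i, (0 : ℝ) < 2 * (ζ i).re + 2 := by
  classical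
  have hn0 : n ≠ 0 := by omega
  have hnpos : 0 < n := by omega
  have hμ : IsPrimitiveRoot (Complex.exp (2 * Real.pi * Complex.I / n)) n :=
    Complex.isPrimitiveRoot_exp n hn0
  set S : Finset ℂ := primitiveRoots n ℂ with hS
  have hcardS : S.card = n.totient := hμ.card_primitiveRoots
  -- primitive roots have nonzero imaginary part
  have him : ∀ z ∈ S, z.im ≠ 0 := by
    intro z hz h0
    have hp : IsPrimitiveRoot z n := (mem_primitiveRoots hnpos).mp hz
    have hnorm : ‖z‖ = 1 := hp.norm'_eq_one hn0
    have hsq : z.re * z.re + z.im * z.im = 1 := by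
      have h2 : ‖z‖ = 1 := hnorm
      have h3 := Complex.sq_norm z
      rw [h2, Complex.normSq_apply] at h3
      nlinarith [h3]
    have hre : z.re = 1 ∨ z.re = -1 := by
      have h1 : (z.re - 1) * (z.re + 1) = 0 := by nlinarith
      rcases mul_eq_zero.mp h1 with h | h
      · left; linarith
      · right; linarith
    rcases hre with h | h
    · have hz1 : z = 1 := Complex.ext (by simp [h]) (by simp [h0])
      have := Nat.le_of_dvd one_pos (hp.dvd_of_pow_eq_one 1 (by rw [hz1]; simp))
      omega
    · have hz1 : z = -1 := Complex.ext (by simp [h]) (by simp [h0])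
      have := hp.dvd_of_pow_eq_one 2 (by rw [hz1]; ring)
      have := Nat.le_of_dvd (by norm_num) this
      omega
  -- conjugation preserves S
  have hconjS : ∀ z ∈ S, (starRingEnd ℂ) z ∈ S := by
    intro z hz
    exact (mem_primitiveRoots hnpos).mpr
      (((mem_primitiveRoots hnpos).mp hz).map_of_injective (starRingEnd ℂ).injective)
  set T : Finset ℂ := S.filter fun z => 0 < z.im with hT
  set T' : Finset ℂ := S.filter fun z => z.im < 0 with hT'
  have hT'img : T' = T.image (starRingEnd ℂ) := by
    ext z
    simp only [hT, hT', Finset.mem_image, Finset.mem_filter]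
    constructor
    · rintro ⟨hzS, hzim⟩
      refine ⟨(starRingEnd ℂ) z, ⟨hconjS z hzS, ?_⟩, ?_⟩
      · simpa [Complex.conj_im] using hzim
      · simp
    · rintro ⟨w, ⟨hwS, hwim⟩, rfl⟩
      exact ⟨hconjS w hwS, by simpa [Complex.conj_im] using hwim⟩
  have hdisj : Disjoint T T' := by
    rw [Finset.disjoint_left]
    intro z hz hz'
    rw [hT, Finset.mem_filter] at hz
    rw [hT', Finset.mem_filter] at hz'
    linarith [hz.2, hz'.2]
  have hunion : T ∪ T' = S := by
    ext z
    simp only [hT, hT', Finset.mem_union, Finset.mem_filter]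
    constructor
    · rintro (⟨h, _⟩ | ⟨h, _⟩) <;> exact h
    · intro hz
      rcases lt_or_gt_of_ne (him z hz) with h | h
      · right; exact ⟨hz, h⟩
      · left; exact ⟨hz, h⟩
  have hcardT : T.card = n.totient / 2 := by
    have h1 : T'.card = T.card := by
      rw [hT'img, Finset.card_image_of_injective _ (starRingEnd ℂ).injective]
    have h2 : T.card + T'.card = n.totient := by
      rw [← Finset.card_union_of_disjoint hdisj, hunion, hcardS]
    omega
  set e := T.equivFinOfCardEq hcardT with he
  set ζ : Fin (n.totient / 2) → ℂ := fun i => ((e.symm i : ℂ)) with hζ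
  have hζT : ∀ i, ζ i ∈ T := fun i => (e.symm i).2
  have hζS : ∀ i, ζ i ∈ S := fun i => Finset.mem_of_mem_filter _ (hζT i)
  have hprim : ∀ i, IsPrimitiveRoot (ζ i) n := fun i =>
    (mem_primitiveRoots hnpos).mp (hζS i)
  have hζim : ∀ i, 0 < (ζ i).im := fun i => (Finset.mem_filter.mp (hζT i)).2
  have hζconj : ∀ i, ζ i * (starRingEnd ℂ) (ζ i) = 1 := by
    intro i
    have hnorm : ‖ζ i‖ = 1 := (hprim i).norm'_eq_one hn0
    rw [Complex.mul_conj]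
    rw [Complex.normSq_eq_norm_sq]
    have : ‖ζ i‖ = 1 := hnorm
    rw [this]
    norm_num
  have hpos : ∀ i, (0 : ℝ) < 2 * (ζ i).re + 2 := by
    intro i
    have hnorm : ‖ζ i‖ = 1 := (hprim i).norm'_eq_one hn0
    have habs : ‖ζ i‖ = 1 := hnorm
    have h := Complex.sq_norm (ζ i)
    rw [habs, Complex.normSq_apply] at h
    have him' := hζim i
    nlinarith
  refine ⟨ζ, hprim, ?_, hpos⟩
  -- the product of quadratics
  set Q : MvPolynomial (Fin 2) ℂ :=
    ∏ i, (X 0 ^ 2 + C (2 * (ζ i).re + 2 : ℂ) * X 1) with hQ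
  -- evaluation of Q is the cyclotomic polynomial
  have hcyc : Polynomial.cyclotomic n ℂ = ∏ z ∈ S, (Polynomial.X - Polynomial.C z) :=
    Polynomial.cyclotomic_eq_prod_X_sub_primitiveRoots hμ
  have hprodT : ∏ z ∈ S, (Polynomial.X - Polynomial.C z) =
      ∏ z ∈ T, ((Polynomial.X - Polynomial.C z) *
        (Polynomial.X - Polynomial.C ((starRingEnd ℂ) z))) := by
    rw [← hunion, Finset.prod_union hdisj, hT'img,
      Finset.prod_image fun a _ b _ h => (starRingEnd ℂ).injective h,
      ← Finset.prod_mul_distrib]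
  have hevalQ : MvPolynomial.aeval ![1 + Polynomial.X, -Polynomial.X] Q =
      Polynomial.cyclotomic n ℂ := by
    rw [hQ, map_prod]
    have hfac : ∀ i, MvPolynomial.aeval ![1 + Polynomial.X, -Polynomial.X]
        (X 0 ^ 2 + C (2 * (ζ i).re + 2 : ℂ) * X 1) =
        (Polynomial.X - Polynomial.C (ζ i)) *
          (Polynomial.X - Polynomial.C ((starRingEnd ℂ) (ζ i))) := by
      intro i
      have h1 : MvPolynomial.aeval ![1 + Polynomial.X, -Polynomial.X]
          (X 0 ^ 2 + C (2 * (ζ i).re + 2 : ℂ) * X 1) =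
          (1 + Polynomial.X) ^ 2 +
            Polynomial.C (2 * ((ζ i).re : ℂ) + 2) * (-Polynomial.X) := by
        simp [MvPolynomial.aeval_X, MvPolynomial.algHom_C]
      rw [h1]
      exact lucas_quad (ζ i) (hζconj i)
    rw [Finset.prod_congr rfl fun i _ => hfac i, hcyc, hprodT]
    rw [← Finset.prod_coe_sort T]
    exact Equiv.prod_comp e.symm (fun z : T => (Polynomial.X - Polynomial.C (z : ℂ)) *
      (Polynomial.X - Polynomial.C ((starRingEnd ℂ) (z : ℂ))))
  -- evaluation of the mapped P is the cyclotomic polynomial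
  have hevalP : MvPolynomial.aeval ![1 + Polynomial.X, -Polynomial.X]
      (MvPolynomial.map (Int.castRingHom ℂ) P) = Polynomial.cyclotomic n ℂ := by
    have h1 : MvPolynomial.aeval ![1 + Polynomial.X, -Polynomial.X]
        (MvPolynomial.map (Int.castRingHom ℂ) P) =
        MvPolynomial.eval₂ ((algebraMap ℂ (Polynomial ℂ)).comp (Int.castRingHom ℂ))
          ![1 + Polynomial.X, -Polynomial.X] P := by
      rw [MvPolynomial.aeval_def, MvPolynomial.eval₂_map]
    have h2 : Polynomial.mapRingHom (Int.castRingHom ℂ)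
        (MvPolynomial.aeval ![1 + Polynomial.X, -Polynomial.X] P) =
        MvPolynomial.eval₂
          ((Polynomial.mapRingHom (Int.castRingHom ℂ)).comp (algebraMap ℤ (Polynomial ℤ)))
          (⇑(Polynomial.mapRingHom (Int.castRingHom ℂ)) ∘ ![1 + Polynomial.X, -Polynomial.X]) P := by
      rw [MvPolynomial.aeval_def, MvPolynomial.eval₂_comp_left]
    rw [heval] at h2
    have hhom : ((algebraMap ℂ (Polynomial ℂ)).comp (Int.castRingHom ℂ)) =
        ((Polynomial.mapRingHom (Int.castRingHom ℂ)).comp (algebraMap ℤ (Polynomial ℤ))) :=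
      RingHom.ext_int _ _
    have hfun : (⇑(Polynomial.mapRingHom (Int.castRingHom ℂ)) ∘
        (![1 + Polynomial.X, -Polynomial.X] : Fin 2 → Polynomial ℤ)) =
        (![1 + Polynomial.X, -Polynomial.X] : Fin 2 → Polynomial ℂ) := by
      funext i
      fin_cases i <;> simp
    rw [h1, hhom, ← hfun, ← h2]
    exact Polynomial.map_cyclotomic n (Int.castRingHom ℂ)
  -- homogeneity of Q
  set w : Fin 2 → ℕ := ![1, 2] with hw
  have hwapp : ∀ m : Fin 2 →₀ ℕ, Finsupp.weight w m = m 0 + 2 * m 1 := by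
    intro m
    rw [Finsupp.weight_apply, Finsupp.sum_fintype _ _ (by simp)]
    simp only [Fin.sum_univ_two, smul_eq_mul, hw]
    simp [Matrix.cons_val_zero, Matrix.cons_val_one]
    ring
  have hQhom : IsWeightedHomogeneous w Q n.totient := by
    have heven := Nat.totient_even (by omega : 2 < n)
    have hfac : ∀ i : Fin (n.totient / 2),
        IsWeightedHomogeneous w (X 0 ^ 2 + C (2 * (ζ i).re + 2 : ℂ) * X 1) 2 := by
      intro i
      have hX0 : IsWeightedHomogeneous w ((X 0 : MvPolynomial (Fin 2) ℂ) ^ 2) 2 := by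
        have := (isWeightedHomogeneous_X ℂ w 0).mul (isWeightedHomogeneous_X ℂ w 0)
        rw [← sq] at this
        simpa [hw] using this
      have hX1 : IsWeightedHomogeneous w
          (C (2 * (ζ i).re + 2 : ℂ) * X 1 : MvPolynomial (Fin 2) ℂ) 2 := by
        have := (isWeightedHomogeneous_C w (2 * (ζ i).re + 2 : ℂ)).mul
          (isWeightedHomogeneous_X ℂ w 1)
        simpa [hw] using this
      exact hX0.add hX1
    have := IsWeightedHomogeneous.prod Finset.univ
      (fun i => (X 0 ^ 2 + C (2 * (ζ i).re + 2 : ℂ) * X 1)) (fun _ => 2)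
      (fun i _ => hfac i)
    have hsum : ∑ _i : Fin (n.totient / 2), 2 = n.totient := by
      rw [Finset.sum_const, Finset.card_univ, Fintype.card_fin, smul_eq_mul]
      obtain ⟨k, hk⟩ := heven
      omega
    rwa [hsum] at this
  -- conclude via the key lemma
  have hD : MvPolynomial.map (Int.castRingHom ℂ) P - Q = 0 := by
    apply lucas_key (d := n.totient)
    · intro m hm
      rw [MvPolynomial.coeff_sub] at hm
      by_cases h1 : MvPolynomial.coeff m (MvPolynomial.map (Int.castRingHom ℂ) P) ≠ 0
      · rw [MvPolynomial.coeff_map] at h1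
        have : P.coeff m ≠ 0 := fun h => h1 (by rw [h]; simp)
        exact hform m this
      · push_neg at h1
        have h2 : MvPolynomial.coeff m Q ≠ 0 := fun h => hm (by rw [h1, h, sub_zero])
        have := hQhom h2
        rw [hwapp] at this
        exact this
    · rw [map_sub, hevalQ, hevalP, sub_self]
  exact sub_eq_zero.mp hD
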